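/- The function f(x) = (x+1)·log(2/(x+1)) + x·log x is (1/(M(M+1)))-convex on the interval (0, M] for every M > 0. -/

import Mathlib

theorem jensenShannon_kappa_convex (M : ℝ) (hM : 0 < M) :
    ConvexOn ℝ (Set.Ioc 0 M)
      (fun x => (x + 1) * Real.log (2 / (x + 1)) + x * Real.log x
          - (1 / (M * (M + 1))) * x ^ 2 / 2) := by
  set κ : ℝ := 1 / (M * (M + 1)) with hκ
  have hint : interior (Set.Ioc (0:ℝ) M) = Set.Ioo 0 M := interior_Ioc
  have key : ConvexOn ℝ (Set.Ioc 0 M)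
      (fun x => (x + 1) * (Real.log 2 - Real.log (x + 1)) + x * Real.log x - κ * x ^ 2 / 2) := by
    apply convexOn_of_hasDerivWithinAt2_nonneg (convex_Ioc 0 M)
      (f' := fun x => Real.log 2 - Real.log (x + 1) + Real.log x - κ * x)
      (f'' := fun x => 1 / x - 1 / (x + 1) - κ)
    · -- continuity
      apply ContinuousOn.sub
      apply ContinuousOn.add
      · exact (continuousOn_id.add continuousOn_const).mul
          (continuousOn_const.sub ((continuousOn_id.add continuousOn_const).log
            (fun x hx => by have := hx.1; show x + 1 ≠ 0; exact ne_of_gt (by linarith))))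
      · exact continuousOn_id.mul (continuousOn_id.log (fun x hx => ne_of_gt hx.1))
      · fun_prop
    · rw [hint]
      intro x hx
      have hx0 : (0:ℝ) < x := hx.1
      have hx1 : x + 1 ≠ 0 := by linarith
      have h1 := ((hasDerivAt_id' x).add_const 1).mul
          ((hasDerivAt_const x (Real.log 2)).sub
            (((hasDerivAt_id' x).add_const 1).log hx1))
      have h2 : HasDerivAt (fun y : ℝ => y * Real.log y) (Real.log x + 1) x :=
        Real.hasDerivAt_mul_log (ne_of_gt hx0)
      have h3 : HasDerivAt (fun y : ℝ => κ * y ^ 2 / 2) (κ * (2 * x) / 2) x := by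
        exact (((hasDerivAt_pow 2 x).const_mul κ).div_const 2).congr_deriv (by ring)
      have := ((h1.add h2).sub h3)
      refine (this.congr_deriv ?_).hasDerivWithinAt
      field_simp
      simp only [Pi.sub_apply]
      ring
    · rw [hint]
      intro x hx
      have hx0 : (0:ℝ) < x := hx.1
      have hx1 : x + 1 ≠ 0 := by linarith
      have h1 : HasDerivAt (fun y : ℝ => Real.log 2 - Real.log (y + 1) + Real.log y - κ * y)
          (0 - 1 / (x + 1) + 1 / x - κ * 1) x := by
        refine HasDerivAt.sub ?_ ((hasDerivAt_id x).const_mul κ)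
        refine HasDerivAt.add ?_ ?_
        · exact (hasDerivAt_const x (Real.log 2)).sub
            (by simpa using ((hasDerivAt_id' x).add_const 1).log hx1)
        · simpa using Real.hasDerivAt_log (ne_of_gt hx0)
      refine (h1.congr_deriv ?_).hasDerivWithinAt
      ring
    · rw [hint]
      intro x hx
      have hx0 : (0:ℝ) < x := hx.1
      have hxM : x ≤ M := le_of_lt hx.2
      have h1 : 1 / x - 1 / (x + 1) = 1 / (x * (x + 1)) := by
        field_simp
        ring
      rw [h1, hκ]
      have hpos : (0:ℝ) < x * (x + 1) := by nlinarith
      have hle : x * (x + 1) ≤ M * (M + 1) := by nlinarith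
      have := one_div_le_one_div_of_le hpos hle
      linarith
  refine key.congr (fun x hx => ?_)
  have hx1 : (0:ℝ) < x + 1 := by have := hx.1; linarith
  rw [Real.log_div (by norm_num) (ne_of_gt hx1)]
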